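/- Let (Θ, 𝔉) be a measurable space, μ a probability measure on Θ, and g : Θ → ℝ a measurable function. Let K ≥ 1 be a natural number and let ε ∈ (0, 1] and η ∈ (0, 1) be real numbers satisfying ε ≥ (2/K)·(ln(1/η) + 1). Then, with respect to the product measure μ^K on Θ^K (modeling K independent samples drawn i.i.d. from μ), the set of sample vectors ω = (ω₁, …, ω_K) ∈ Θ^K for which μ({θ ∈ Θ : g(θ) > max_{1≤i≤K} g(ω_i)}) ≤ ε has μ^K-measure at least 1 − η. -/

import Mathlib

open MeasureTheory

private lemma scenario_aux_quantile
    {Θ : Type*} [MeasurableSpace Θ] (μ : Measure Θ) [IsProbabilityMeasure μ]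
    (g : Θ → ℝ) (hg : Measurable g) (ε' : ENNReal) (hε0 : 0 < ε') (hε1 : ε' ≤ 1) :
    μ {θ : Θ | ε' < μ {θ' : Θ | g θ' > g θ}} ≤ 1 - ε' := by
  set F : ℝ → ENNReal := fun x => μ {θ' : Θ | x < g θ'} with hF
  have hFanti : Antitone F := by
    intro a b hab
    exact measure_mono (fun θ hθ => lt_of_le_of_lt hab hθ)
  have hmeas : ∀ x : ℝ, MeasurableSet {θ' : Θ | x < g θ'} :=
    fun x => measurableSet_lt measurable_const hg
  have hScompl : {θ : Θ | ε' < μ {θ' : Θ | g θ' > g θ}} = {θ : Θ | F (g θ) ≤ ε'}ᶜ := by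
    ext θ; simp [F, not_le]
  -- key claim : μ {θ | F (g θ) ≤ ε'} ≥ ε'
  have hkey : ε' ≤ μ {θ : Θ | F (g θ) ≤ ε'} := by
    set T : Set ℝ := {x : ℝ | F x ≤ ε'} with hT
    by_cases hbdd : BddBelow T
    · -- T is nonempty
      have hTne : T.Nonempty := by
        have hinter : (⋂ n : ℕ, {θ' : Θ | (n : ℝ) < g θ'}) = ∅ := by
          ext θ; simp only [Set.mem_iInter, Set.mem_setOf_eq, Set.mem_empty_iff_false,
            iff_false, not_forall, not_lt]
          obtain ⟨n, hn⟩ := exists_nat_gt (g θ)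
          exact ⟨n, le_of_lt hn⟩
        have hanti : Antitone (fun n : ℕ => {θ' : Θ | (n : ℝ) < g θ'}) := by
          intro m n hmn θ hθ
          simp only [Set.mem_setOf_eq] at *
          exact lt_of_le_of_lt (by exact_mod_cast hmn) hθ
        have h0 : (⨅ n : ℕ, F (n : ℝ)) = 0 := by
          have := Directed.measure_iInter (μ := μ)
            (fun n : ℕ => (hmeas (n : ℝ)).nullMeasurableSet) hanti.directed_ge
            ⟨0, measure_ne_top μ _⟩
          rw [hinter] at this
          simpa [F] using this.symm
        have : (⨅ n : ℕ, F (n : ℝ)) < ε' := by rw [h0]; exact hε0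
        obtain ⟨n, hn⟩ := iInf_lt_iff.mp this
        exact ⟨(n : ℝ), le_of_lt hn⟩
      set c : ℝ := sInf T with hc
      by_cases hcT : c ∈ T
      · -- μ {θ | c ≤ g θ} ≥ ε' and {θ | c ≤ g θ} ⊆ target
        have hsub : {θ : Θ | c ≤ g θ} ⊆ {θ : Θ | F (g θ) ≤ ε'} := by
          intro θ hθ
          exact le_trans (hFanti hθ) hcT
        refine le_trans ?_ (measure_mono hsub)
        have hinter : {θ : Θ | c ≤ g θ} = ⋂ n : ℕ, {θ : Θ | c - 1 / (n + 1) < g θ} := by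
          ext θ
          simp only [Set.mem_setOf_eq, Set.mem_iInter]
          constructor
          · intro h n
            have : (0 : ℝ) < 1 / (n + 1) := by positivity
            linarith
          · intro h
            by_contra hlt
            push_neg at hlt
            obtain ⟨n, hn⟩ := exists_nat_one_div_lt (show (0:ℝ) < c - g θ by linarith)
            have := h n
            linarith
        rw [hinter]
        have hanti : Antitone (fun n : ℕ => {θ : Θ | c - 1 / (n + 1) < g θ}) := by
          intro m n hmn θ hθ
          simp only [Set.mem_setOf_eq] at *
          have h1 : (1 : ℝ) / (n + 1) ≤ 1 / (m + 1) := by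
            apply one_div_le_one_div_of_le (by positivity)
            have : (m : ℝ) ≤ n := by exact_mod_cast hmn
            linarith
          linarith
        rw [Directed.measure_iInter
          (fun n : ℕ => (measurableSet_lt measurable_const hg).nullMeasurableSet)
          hanti.directed_ge ⟨0, measure_ne_top μ _⟩]
        refine le_iInf fun n => ?_
        have hnotT : c - 1 / (n + 1) ∉ T := by
          intro hmem
          have := csInf_le hbdd hmem
          have hpos : (0 : ℝ) < 1 / (n + 1) := by positivity
          rw [← hc] at this
          linarith
        have : ε' < F (c - 1 / (n + 1)) := by
          simpa [T, not_le] using hnotT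
        exact le_of_lt this
      · -- F c > ε', so μ {g > c} > ε', and {g > c} ⊆ target
        have hFc : ε' < F c := by simpa [T, not_le] using hcT
        have hsub : {θ : Θ | c < g θ} ⊆ {θ : Θ | F (g θ) ≤ ε'} := by
          intro θ hθ
          obtain ⟨y, hyT, hy⟩ := (csInf_lt_iff hbdd hTne).mp hθ
          exact le_trans (hFanti (le_of_lt hy)) hyT
        calc ε' ≤ F c := le_of_lt hFc
          _ ≤ μ {θ : Θ | F (g θ) ≤ ε'} := measure_mono hsub
    · -- T not bounded below: every x has F x ≤ ε'
      have hall : ∀ x : ℝ, F x ≤ ε' := by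
        intro x
        rw [bddBelow_def] at hbdd
        push_neg at hbdd
        obtain ⟨y, hyT, hy⟩ := hbdd x
        exact le_trans (hFanti hy.le) hyT
      have huniv : {θ : Θ | F (g θ) ≤ ε'} = Set.univ := by
        ext θ; simp [hall (g θ)]
      rw [huniv, measure_univ]
      exact hε1
  rw [hScompl]
  have hSmeas : MeasurableSet {θ : Θ | F (g θ) ≤ ε'} := by
    have : Measurable F := hFanti.measurable
    exact (this.comp hg) measurableSet_Iic
  rw [measure_compl hSmeas (measure_ne_top μ _), measure_univ]
  exact tsub_le_tsub_left hkey 1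

theorem scenario_optimization_guarantee
    {Θ : Type*} [MeasurableSpace Θ] (μ : Measure Θ) [IsProbabilityMeasure μ]
    (g : Θ → ℝ) (hg : Measurable g)
    (K : ℕ) (hK : 1 ≤ K) (ε η : ℝ)
    (hε : ε ∈ Set.Ioc (0 : ℝ) 1) (hη : η ∈ Set.Ioo (0 : ℝ) 1)
    (hcond : ε ≥ (2 / K) * (Real.log (1 / η) + 1)) :
    (Measure.pi fun _ : Fin K => μ)
      {ω : Fin K → Θ |
        μ {θ : Θ | g θ > ⨆ i : Fin K, g (ω i)} ≤ ENNReal.ofReal ε}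
      ≥ 1 - ENNReal.ofReal η := by
  obtain ⟨hε0, hε1⟩ := hε
  obtain ⟨hη0, hη1⟩ := hη
  set ε' : ENNReal := ENNReal.ofReal ε with hε'
  have hε'0 : 0 < ε' := ENNReal.ofReal_pos.mpr hε0
  have hε'1 : ε' ≤ 1 := by
    rw [hε', ← ENNReal.ofReal_one]
    exact ENNReal.ofReal_le_ofReal hε1
  set G : Set (Fin K → Θ) :=
    {ω : Fin K → Θ | μ {θ : Θ | g θ > ⨆ i : Fin K, g (ω i)} ≤ ε'} with hG
  set S : Set Θ := {θ : Θ | ε' < μ {θ' : Θ | g θ' > g θ}} with hS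
  have hSbound : μ S ≤ 1 - ε' := scenario_aux_quantile μ g hg ε' hε'0 hε'1
  have hFanti : Antitone (fun x : ℝ => μ {θ' : Θ | x < g θ'}) := by
    intro a b hab
    exact measure_mono (fun θ hθ => lt_of_le_of_lt hab hθ)
  -- Gᶜ ⊆ S^K
  have hsub : Gᶜ ⊆ Set.univ.pi (fun _ : Fin K => S) := by
    intro ω hω
    simp only [hG, Set.mem_compl_iff, Set.mem_setOf_eq, not_le] at hω
    intro i _
    simp only [hS, Set.mem_setOf_eq]
    refine lt_of_lt_of_le hω (hFanti ?_)
    haveI : Nonempty (Fin K) := ⟨⟨0, hK⟩⟩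
    exact le_ciSup (f := fun j : Fin K => g (ω j)) (Set.Finite.bddAbove (Set.finite_range _)) i
  have hprodbound : (Measure.pi fun _ : Fin K => μ) Gᶜ ≤ ENNReal.ofReal η := by
    calc (Measure.pi fun _ : Fin K => μ) Gᶜ
        ≤ (Measure.pi fun _ : Fin K => μ) (Set.univ.pi fun _ : Fin K => S) :=
          measure_mono hsub
      _ = ∏ _i : Fin K, μ S := Measure.pi_pi _ _
      _ = (μ S) ^ K := by simp [Finset.prod_const]
      _ ≤ (ENNReal.ofReal (1 - ε)) ^ K := by
          gcongr
          refine le_trans hSbound ?_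
          rw [ENNReal.ofReal_sub _ (le_of_lt hε0), ENNReal.ofReal_one]
      _ = ENNReal.ofReal ((1 - ε) ^ K) := by
          rw [ENNReal.ofReal_pow (by linarith)]
      _ ≤ ENNReal.ofReal η := by
          apply ENNReal.ofReal_le_ofReal
          have hKpos : (0 : ℝ) < K := by exact_mod_cast hK
          have hL : 0 < Real.log (1 / η) := by
            apply Real.log_pos
            rw [lt_div_iff₀ hη0]
            linarith
          have hεK : Real.log (1 / η) ≤ ε * K := by
            have h1 : (2 / K) * (Real.log (1 / η) + 1) * K = 2 * (Real.log (1 / η) + 1) := by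
              field_simp
            nlinarith
          have h2 : (1 - ε) ^ K ≤ Real.exp (-ε) ^ K := by
            apply pow_le_pow_left₀ (by linarith)
            linarith [Real.add_one_le_exp (-ε)]
          have h3 : Real.exp (-ε) ^ K = Real.exp (-(ε * K)) := by
            rw [← Real.exp_nat_mul]; ring_nf
          have h4 : Real.exp (-(ε * K)) ≤ η := by
            rw [← Real.exp_log hη0]
            apply Real.exp_le_exp.mpr
            have hlog : Real.log (1 / η) = -Real.log η := by rw [one_div, Real.log_inv]
            rw [hlog] at hεK
            linarith
          calc (1 - ε) ^ K ≤ Real.exp (-ε) ^ K := h2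
            _ = Real.exp (-(ε * K)) := h3
            _ ≤ η := h4
  have : (1 : ENNReal) ≤ (Measure.pi fun _ : Fin K => μ) G + ENNReal.ofReal η := by
    calc (1 : ENNReal) = (Measure.pi fun _ : Fin K => μ) Set.univ := measure_univ.symm
      _ = (Measure.pi fun _ : Fin K => μ) (G ∪ Gᶜ) := by rw [Set.union_compl_self]
      _ ≤ (Measure.pi fun _ : Fin K => μ) G + (Measure.pi fun _ : Fin K => μ) Gᶜ :=
          measure_union_le _ _
      _ ≤ (Measure.pi fun _ : Fin K => μ) G + ENNReal.ofReal η := by gcongr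
  exact tsub_le_iff_right.mpr this
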